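/- For every real r with 0 < r < 1, (3 − 2r)·log(1/(1−r)) > 2r. Equivalently, ((2r−3)/r)·log(1−r) − 2 > 0. -/

import Mathlib

open Real

lemma neg_log_one_sub_gt {r : ℝ} (h0 : 0 < r) (h1 : r < 1) :
    r + r^2/2 + r^3/3 + r^4/4 < -Real.log (1 - r) := by
  set f : ℝ → ℝ := fun x => -Real.log (1 - x) - (x + x^2/2 + x^3/3 + x^4/4) with hf
  have key : StrictMonoOn f (Set.Icc 0 r) := by
    apply strictMonoOn_of_deriv_pos (convex_Icc _ _)
    · apply ContinuousOn.sub
      · apply ContinuousOn.neg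
        apply Real.continuousOn_log.comp (by fun_prop)
        intro x hx
        simp only [Set.mem_Icc] at hx
        simp only [Set.mem_compl_iff, Set.mem_singleton_iff]
        nlinarith [hx.2]
      · fun_prop
    · intro x hx
      rw [interior_Icc] at hx
      obtain ⟨hx0, hxr⟩ := hx
      have hx1 : x < 1 := lt_trans hxr h1
      have hne : 1 - x ≠ 0 := by nlinarith
      have hd : HasDerivAt f (1 / (1 - x) - (1 + x + x^2 + x^3)) x := by
        have hlog : HasDerivAt (fun y : ℝ => Real.log (1 - y)) (-(1 / (1 - x))) x := by
          have h1d : HasDerivAt (fun y : ℝ => 1 - y) (-1 : ℝ) x := by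
            simpa using (hasDerivAt_id x).const_sub 1
          have := (Real.hasDerivAt_log hne).comp x h1d
          exact this.congr_deriv (by ring)
        have hpoly : HasDerivAt (fun y : ℝ => y + y^2/2 + y^3/3 + y^4/4)
            (1 + x + x^2 + x^3) x := by
          have := ((((hasDerivAt_id x).add ((hasDerivAt_pow 2 x).div_const 2)).add
            ((hasDerivAt_pow 3 x).div_const 3)).add ((hasDerivAt_pow 4 x).div_const 4))
          exact this.congr_deriv (by norm_num)
        exact (hlog.neg.sub hpoly).congr_deriv (by ring)
      rw [hd.deriv]
      have : 1 / (1 - x) - (1 + x + x^2 + x^3) = x^4 / (1 - x) := by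
        field_simp
        ring
      rw [this]
      exact div_pos (pow_pos hx0 4) (by linarith)
  have := key (Set.left_mem_Icc.2 (le_of_lt h0)) (Set.right_mem_Icc.2 (le_of_lt h0)) h0
  simp only [hf] at this
  norm_num at this
  linarith

/-- The scalar inequality `Q'(1) > 0` in the proof of Theorem 2.4, in its two
equivalent forms. -/
theorem laplace_Q_deriv_pos (r : ℝ) (hr : r ∈ Set.Ioo (0 : ℝ) 1) :
    2 * r < (3 - 2 * r) * Real.log (1 / (1 - r)) ∧
      0 < ((2 * r - 3) / r) * Real.log (1 - r) - 2 := by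
  obtain ⟨h0, h1⟩ := hr
  have hlog := neg_log_one_sub_gt h0 h1
  have hcoef : (0 : ℝ) < 3 - 2 * r := by linarith
  have hmain : 2 * r < (3 - 2 * r) * (-Real.log (1 - r)) := by
    have step : (3 - 2 * r) * (r + r^2/2 + r^3/3 + r^4/4) <
        (3 - 2 * r) * (-Real.log (1 - r)) := by
      exact mul_lt_mul_of_pos_left hlog hcoef
    nlinarith [sq_nonneg r, sq_nonneg (1 - r), pow_pos h0 3, pow_pos h0 4]
  have hinv : Real.log (1 / (1 - r)) = -Real.log (1 - r) := by
    rw [one_div, Real.log_inv]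
  constructor
  · rw [hinv]; exact hmain
  · have : (2 * r - 3) / r * Real.log (1 - r) =
        ((3 - 2 * r) * (-Real.log (1 - r))) / r := by
      field_simp; ring
    rw [this]
    rw [lt_sub_iff_add_lt, zero_add, lt_div_iff₀ h0]
    linarith [hmain]
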